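/- For every δ ∈ (0, ∞) and every nonzero integer n, the quantity 𝔏_δ(n) := δ^{−1}(n·coth(δn) − δ^{−1}) satisfies 0 < 𝔏_δ(n) < min(n²/3, |n|/δ). -/

import Mathlib

open Real

lemma keyA (t : ℝ) (ht : 0 < t) :
    t ^ 2 + 3 * t + 3 < Real.exp t ^ 2 * (t ^ 2 - 3 * t + 3) := by
  have hP : 1 + 2*t + 2*t^2 + 4/3*t^3 + 2/3*t^4 + 4/15*t^5 ≤ Real.exp (2*t) := by
    have := Real.sum_le_exp_of_nonneg (x := 2*t) (by positivity) 6
    norm_num [Finset.sum_range_succ, Nat.factorial] at this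
    nlinarith [this]
  have h2 : Real.exp (2*t) = Real.exp t ^ 2 := by
    rw [← Real.exp_nat_mul]; norm_num
  rw [h2] at hP
  nlinarith [mul_pos (mul_pos (mul_pos ht ht) (mul_pos ht ht)) ht,
    sq_nonneg t, sq_nonneg (t-1), mul_pos ht ht,
    mul_le_mul_of_nonneg_right hP (by nlinarith [sq_nonneg (t - 3/2)] : (0:ℝ) ≤ t^2 - 3*t + 3)]

lemma keyB (t : ℝ) (ht : 0 < t) : Real.sinh t < t * Real.cosh t := by
  have h : StrictMonoOn (fun x : ℝ => x * Real.cosh x - Real.sinh x) (Set.Ici 0) := by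
    apply strictMonoOn_of_deriv_pos (convex_Ici 0)
    · fun_prop
    · intro x hx
      rw [interior_Ici, Set.mem_Ioi] at hx
      have hd : HasDerivAt (fun x : ℝ => x * Real.cosh x - Real.sinh x)
          (x * Real.sinh x) x := by
        have h1 := (hasDerivAt_id x).mul (Real.hasDerivAt_cosh x)
        have h2 := Real.hasDerivAt_sinh x
        have h3 := h1.sub h2
        convert h3 using 1
        · rfl
        · rfl
        · funext y; rfl
        · simp only [id]; ring
      rw [hd.deriv]
      exact mul_pos hx (by rwa [Real.sinh_pos_iff])
  have := h Set.self_mem_Ici (Set.mem_Ici.2 ht.le) ht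
  simp only [Real.cosh_zero, Real.sinh_zero, mul_one, zero_mul, sub_zero, zero_sub, neg_zero] at this
  linarith

lemma keyA' (t : ℝ) (ht : 0 < t) :
    3 * (t * Real.cosh t - Real.sinh t) < t ^ 2 * Real.sinh t := by
  have hE : (0:ℝ) < Real.exp t := Real.exp_pos t
  have hA := keyA t ht
  rw [Real.cosh_eq, Real.sinh_eq, Real.exp_neg]
  have hE0 : Real.exp t ≠ 0 := ne_of_gt hE
  field_simp
  nlinarith [hA, hE, mul_pos hE hE]

lemma keyB' (t : ℝ) (ht : 0 < t) :
    t * Real.cosh t - Real.sinh t < t * Real.sinh t := by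
  have hE : (0:ℝ) < Real.exp t := Real.exp_pos t
  have h2 : 1 + 2*t < Real.exp t ^ 2 := by
    have := Real.add_one_lt_exp (by positivity : 2*t ≠ 0)
    rw [show Real.exp (2*t) = Real.exp t ^ 2 by rw [← Real.exp_nat_mul]; norm_num] at this
    linarith
  rw [Real.cosh_eq, Real.sinh_eq, Real.exp_neg]
  have hE0 : Real.exp t ≠ 0 := ne_of_gt hE
  field_simp
  nlinarith [h2, hE]

/-- `coth x = (e^x + e^{-x})/(e^x - e^{-x}) = cosh x / sinh x` (for `x ≠ 0`). -/
noncomputable def myCoth (x : ℝ) : ℝ := Real.cosh x / Real.sinh x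

/-- The scaled ILW dispersion multiplier `𝔏_δ(n) = δ⁻¹ (n · coth(δn) − δ⁻¹)`. -/
noncomputable def Lmul (δ : ℝ) (n : ℤ) : ℝ := δ⁻¹ * ((n : ℝ) * myCoth (δ * n) - δ⁻¹)

/-- For every `δ ∈ (0,∞)` and every nonzero integer `n`,
`0 < 𝔏_δ(n) < min(n²/3, |n|/δ)`. -/
theorem stmt2 (δ : ℝ) (hδ : 0 < δ) (n : ℤ) (hn : n ≠ 0) :
    0 < Lmul δ n ∧ Lmul δ n < min ((n : ℝ) ^ 2 / 3) (|(n : ℝ)| / δ) := by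
  set m : ℝ := |(n : ℝ)| with hm
  have hm0 : 0 < m := abs_pos.2 (by exact_mod_cast hn)
  set t : ℝ := δ * m with hT
  have ht : 0 < t := mul_pos hδ hm0
  have hS : 0 < Real.sinh t := by rwa [Real.sinh_pos_iff]
  have habs : (n : ℝ) * myCoth (δ * n) = m * myCoth t := by
    rcases lt_or_gt_of_ne (show (n:ℝ) ≠ 0 by exact_mod_cast hn) with h | h
    · have hneg : (n:ℝ) = -m := by rw [hm, abs_of_neg h, neg_neg]
      rw [hneg, hT]
      simp [myCoth, mul_neg, Real.cosh_neg, Real.sinh_neg, div_neg]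
    · have hpos : m = (n:ℝ) := abs_of_pos h
      rw [hT, hpos]
  have hL : Lmul δ n = (t * (Real.cosh t / Real.sinh t) - 1) / δ ^ 2 := by
    rw [Lmul, habs]
    rw [myCoth]
    field_simp [hT]
    ring
  constructor
  · rw [hL]
    refine div_pos ?_ (by positivity)
    rw [sub_pos, ← mul_div_assoc]
    exact (one_lt_div hS).2 (keyB t ht)
  · rw [hL, lt_min_iff]
    have hn2 : (n:ℝ)^2 = m^2 := (sq_abs _).symm
    constructor
    · have e2 : (n:ℝ)^2/3 = (t^2/3)/δ^2 := by
        rw [hn2, hT]; field_simp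
      rw [e2]
      refine (div_lt_div_iff_of_pos_right (by positivity)).2 ?_
      rw [sub_lt_iff_lt_add, ← mul_div_assoc, div_lt_iff₀ hS]
      have hA := keyA' t ht
      nlinarith [hA, hS]
    · have e3 : m/δ = t/δ^2 := by
        rw [hT]; field_simp
      rw [e3]
      refine (div_lt_div_iff_of_pos_right (by positivity)).2 ?_
      rw [sub_lt_iff_lt_add, ← mul_div_assoc, div_lt_iff₀ hS]
      have hB := keyB' t ht
      nlinarith [hB, hS]
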